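/- If f : [0,1] → ℝ is convex and p : [0,1] → ℝ is nonnegative and symmetric about 1/2 (i.e. p(1-t) = p(t) for all t ∈ [0,1]), then for all a, b in the domain of f, (∫₀¹ p(t) dt) · f((a+b)/2) ≤ ∫₀¹ p(t) · f((1-t)·a + t·b) dt. -/
import Mathlib


open MeasureTheory Set intervalIntegral

theorem fejer_left (f p : ℝ → ℝ)
    (hf : ConvexOn ℝ (Icc (0:ℝ) 1) f)
    (hp0 : ∀ t ∈ Icc (0:ℝ) 1, 0 ≤ p t)
    (hpsym : ∀ t ∈ Icc (0:ℝ) 1, p (1 - t) = p t)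
    (hpint : IntervalIntegrable p volume 0 1)
    (a b : ℝ) (ha : a ∈ Icc (0:ℝ) 1) (hb : b ∈ Icc (0:ℝ) 1)
    (hint : IntervalIntegrable (fun t => p t * f ((1 - t) * a + t * b)) volume 0 1) :
    (∫ t in (0:ℝ)..1, p t) * f ((a + b) / 2) ≤
      ∫ t in (0:ℝ)..1, p t * f ((1 - t) * a + t * b) := by
  set g : ℝ → ℝ := fun t => p t * f ((1 - t) * a + t * b) with hg
  set h : ℝ → ℝ := fun t => p (1 - t) * f (t * a + (1 - t) * b) with hhdef
  have hh_int : IntervalIntegrable h volume 0 1 := by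
    have := (hint.comp_sub_left 1).symm
    simpa [hhdef, hg] using this
  have hh_eq : (∫ t in (0:ℝ)..1, h t) = ∫ t in (0:ℝ)..1, g t := by
    have := intervalIntegral.integral_comp_sub_left (a := 0) (b := 1) g 1
    simpa [hhdef, hg, sub_sub_cancel] using this
  have key : ∀ t ∈ Icc (0:ℝ) 1, p t * f ((a + b) / 2) ≤ (g t + h t) / 2 := by
    intro t ht
    have hx : (1 - t) * a + t * b ∈ Icc (0:ℝ) 1 :=
      hf.1 ha hb (by linarith [ht.2]) (by linarith [ht.1]) (by ring)
    have hy : t * a + (1 - t) * b ∈ Icc (0:ℝ) 1 :=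
      hf.1 ha hb (by linarith [ht.1]) (by linarith [ht.2]) (by ring)
    have hconv := hf.2 hx hy (by norm_num : (0:ℝ) ≤ (1:ℝ)/2)
      (by norm_num : (0:ℝ) ≤ (1:ℝ)/2) (by norm_num)
    have hmid : ((1:ℝ)/2) • ((1 - t) * a + t * b) + ((1:ℝ)/2) • (t * a + (1 - t) * b)
        = (a + b) / 2 := by simp [smul_eq_mul]; ring
    rw [hmid] at hconv
    have hpt : 0 ≤ p t := hp0 t ht
    have := mul_le_mul_of_nonneg_left hconv hpt
    have hsym := hpsym t ht
    simp only [smul_eq_mul] at this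
    simp only [hg, hhdef, hsym]
    nlinarith [this]
  have hmono : (∫ t in (0:ℝ)..1, p t * f ((a + b) / 2)) ≤
      ∫ t in (0:ℝ)..1, (g t + h t) / 2 := by
    apply intervalIntegral.integral_mono_on (by norm_num)
      (hpint.mul_const _) (((hint.add hh_int).div_const 2)) key
  have hleft : (∫ t in (0:ℝ)..1, p t * f ((a + b) / 2))
      = (∫ t in (0:ℝ)..1, p t) * f ((a + b) / 2) := by
    rw [intervalIntegral.integral_mul_const]
  have hright : (∫ t in (0:ℝ)..1, (g t + h t) / 2) = ∫ t in (0:ℝ)..1, g t := by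
    rw [intervalIntegral.integral_div, intervalIntegral.integral_add hint hh_int, hh_eq]
    ring
  rw [← hleft]
  calc (∫ t in (0:ℝ)..1, p t * f ((a + b) / 2)) ≤ _ := hmono
    _ = _ := by rw [hright]
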